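/- Let T be a positivity-preserving linear operator on L^1(E, m), let p, q ∈ [1, ∞] with 1/p + 1/q = 1, and let f ∈ L^p(E, m), g ∈ L^q(E, m) be nonnegative. Then T[fg](x) ≤ (T[f^p](x))^(1/p) · (T[g^q](x))^(1/q) for m-almost every x ∈ E. -/

import Mathlib

open MeasureTheory
open Filter Topology

lemma aux_real {p q A B C : ℝ} (hpq : p.HolderConjugate q) (hB : 0 ≤ B) (hC : 0 ≤ C)
    (h : ∀ t : ℝ, 0 < t → A ≤ t ^ p * B / p + t ^ (-q) * C / q) :
    A ≤ B ^ (1/p) * C ^ (1/q) := by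
  have hp0 : 0 < p := hpq.pos
  have hq0 : 0 < q := hpq.symm.pos
  rcases hB.eq_or_lt with hB0 | hBpos
  · have hA : A ≤ 0 := by
      have hlim : Tendsto (fun n : ℕ => ((n : ℝ) + 1) ^ (-q) * C / q) atTop (𝓝 0) := by
        have h1 : Tendsto (fun n : ℕ => ((n : ℝ) + 1)) atTop atTop :=
          tendsto_atTop_add_const_right _ 1 tendsto_natCast_atTop_atTop
        have h2 := (tendsto_rpow_neg_atTop hq0).comp h1
        simpa using (h2.mul_const C).div_const q
      refine ge_of_tendsto' hlim fun n => ?_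
      have := h ((n : ℝ) + 1) (by positivity)
      simpa [← hB0] using this
    calc A ≤ 0 := hA
      _ ≤ B ^ (1/p) * C ^ (1/q) := by positivity
  rcases hC.eq_or_lt with hC0 | hCpos
  · have hA : A ≤ 0 := by
      have hlim : Tendsto (fun n : ℕ => ((n : ℝ) + 1) ^ (-p) * B / p) atTop (𝓝 0) := by
        have h1 : Tendsto (fun n : ℕ => ((n : ℝ) + 1)) atTop atTop :=
          tendsto_atTop_add_const_right _ 1 tendsto_natCast_atTop_atTop
        have h2 := (tendsto_rpow_neg_atTop hp0).comp h1
        simpa using (h2.mul_const B).div_const p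
      refine ge_of_tendsto' hlim fun n => ?_
      have hpos : (0:ℝ) < ((n : ℝ) + 1)⁻¹ := by positivity
      have := h (((n : ℝ) + 1)⁻¹) hpos
      rw [Real.inv_rpow (by positivity), ← Real.rpow_neg (by positivity)] at this
      simpa [← hC0] using this
    calc A ≤ 0 := hA
      _ ≤ B ^ (1/p) * C ^ (1/q) := by positivity
  · have hdiv : (0:ℝ) < C / B := div_pos hCpos hBpos
    set t : ℝ := (C / B) ^ (1 / (p * q)) with ht_def
    have ht : 0 < t := Real.rpow_pos_of_pos hdiv _
    have h1 : t ^ p = (C / B) ^ (1 / q) := by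
      rw [ht_def, ← Real.rpow_mul hdiv.le]
      congr 1
      field_simp
    have h2 : t ^ (-q) = (B / C) ^ (1 / p) := by
      rw [ht_def, ← Real.rpow_mul hdiv.le,
        show 1 / (p * q) * (-q) = -(1 / p) by field_simp,
        Real.rpow_neg hdiv.le, ← Real.inv_rpow hdiv.le, inv_div]
    have key : t ^ p * B / p + t ^ (-q) * C / q = B ^ (1/p) * C ^ (1/q) := by
      rw [h1, h2, Real.div_rpow hC hB, Real.div_rpow hB hC]
      have hone : 1/p + 1/q = 1 := by
        simpa [one_div] using hpq.inv_add_inv_eq_inv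
      have hB1 : B = B ^ (1/p) * B ^ (1/q) := by
        rw [← Real.rpow_add hBpos, hone, Real.rpow_one]
      have hC1 : C = C ^ (1/p) * C ^ (1/q) := by
        rw [← Real.rpow_add hCpos, hone, Real.rpow_one]
      have hbne : B ^ (1/q) ≠ 0 := (Real.rpow_pos_of_pos hBpos _).ne'
      have hcne : C ^ (1/p) ≠ 0 := (Real.rpow_pos_of_pos hCpos _).ne'
      have hsum : p + q = p * q := by
        field_simp at hone
        linarith
      set a := B ^ (1/p) with ha
      set b := B ^ (1/q) with hb
      set c := C ^ (1/p) with hc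
      set d := C ^ (1/q) with hd
      rw [hB1, hC1]
      field_simp
      linear_combination (a * d) * hsum
    rw [← key]
    exact h t ht

lemma aux_rat {p q A B C : ℝ} (hpq : p.HolderConjugate q) (hB : 0 ≤ B) (hC : 0 ≤ C)
    (h : ∀ r : ℚ, 0 < r → A ≤ (r:ℝ) ^ p * B / p + (r:ℝ) ^ (-q) * C / q) :
    A ≤ B ^ (1/p) * C ^ (1/q) := by
  apply aux_real hpq hB hC
  intro t ht
  have hex : ∀ n : ℕ, ∃ r : ℚ, t - t / ((n:ℝ)+1) < (r:ℝ) ∧ (r:ℝ) < t := fun n =>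
    exists_rat_btwn (sub_lt_self t (by positivity))
  choose r hr1 hr2 using hex
  have hrpos : ∀ n, 0 < r n := by
    intro n
    have hle : t / ((n:ℝ)+1) ≤ t := div_le_self ht.le (by
      have : (0:ℝ) ≤ (n:ℝ) := Nat.cast_nonneg n
      linarith)
    have h0 : (0:ℝ) < (r n : ℝ) := by linarith [hr1 n]
    exact_mod_cast h0
  have htend : Filter.Tendsto (fun n => (r n : ℝ)) Filter.atTop (𝓝 t) := by
    have hdiv : Filter.Tendsto (fun n : ℕ => t / ((n:ℝ)+1)) Filter.atTop (𝓝 0) :=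
      Filter.Tendsto.div_atTop tendsto_const_nhds
        (tendsto_atTop_add_const_right _ 1 tendsto_natCast_atTop_atTop)
    have hlow : Filter.Tendsto (fun n : ℕ => t - t / ((n:ℝ)+1)) Filter.atTop (𝓝 t) := by
      simpa using tendsto_const_nhds.sub hdiv
    exact tendsto_of_tendsto_of_tendsto_of_le_of_le hlow tendsto_const_nhds
      (fun n => (hr1 n).le) (fun n => (hr2 n).le)
  have hcont : ContinuousAt (fun s : ℝ => s ^ p * B / p + s ^ (-q) * C / q) t := by
    have c1 := Real.continuousAt_rpow_const t p (Or.inl ht.ne')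
    have c2 := Real.continuousAt_rpow_const t (-q) (Or.inl ht.ne')
    exact ((c1.mul continuousAt_const).div_const p).add
      ((c2.mul continuousAt_const).div_const q)
  exact ge_of_tendsto' (hcont.tendsto.comp htend) (fun n => h (r n) (hrpos n))


/-- Pointwise Hölder inequality for a positivity-preserving linear operator on `L¹`. -/
theorem positivity_preserving_pointwise_holder
    {E : Type*} [MeasurableSpace E] (m : Measure E) [SigmaFinite m]
    (T : Lp ℝ 1 m →ₗ[ℝ] Lp ℝ 1 m)
    (hT : ∀ F : Lp ℝ 1 m, 0 ≤ᵐ[m] (F : E → ℝ) → 0 ≤ᵐ[m] (T F : E → ℝ))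
    (p q : ℝ) (hp : 1 ≤ p) (hq : 1 ≤ q) (hpq : 1 / p + 1 / q = 1)
    (f g : E → ℝ) (hf0 : ∀ x, 0 ≤ f x) (hg0 : ∀ x, 0 ≤ g x)
    (hfp : MemLp (fun x => f x ^ p) 1 m)
    (hgq : MemLp (fun x => g x ^ q) 1 m)
    (hfg : MemLp (fun x => f x * g x) 1 m) :
    ∀ᵐ x ∂m,
      (T (hfg.toLp _) : E → ℝ) x ≤
        ((T (hfp.toLp _) : E → ℝ) x) ^ (1 / p) *
          ((T (hgq.toLp _) : E → ℝ) x) ^ (1 / q) := by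
  have hp0 : (0:ℝ) < p := lt_of_lt_of_le one_pos hp
  have hq0 : (0:ℝ) < q := lt_of_lt_of_le one_pos hq
  have hpq' : p.HolderConjugate q := by
    rw [Real.holderConjugate_iff]
    constructor
    · have h1 : 1 / q > 0 := by positivity
      have h2 : 1 / p < 1 := by linarith
      rw [div_lt_one hp0] at h2
      exact h2
    · simpa [one_div] using hpq
  -- monotonicity of T
  have hmono : ∀ F G : Lp ℝ 1 m, (F : E → ℝ) ≤ᵐ[m] (G : E → ℝ) →
      (T F : E → ℝ) ≤ᵐ[m] (T G : E → ℝ) := by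
    intro F G hFG
    have h0 : 0 ≤ᵐ[m] ((G - F : Lp ℝ 1 m) : E → ℝ) := by
      filter_upwards [Lp.coeFn_sub G F, hFG] with x hx hle
      rw [hx]
      exact sub_nonneg.2 hle
    have h2 := hT (G - F) h0
    rw [map_sub] at h2
    filter_upwards [h2, Lp.coeFn_sub (T G) (T F)] with x hx heq
    rw [heq] at hx
    simp only [Pi.zero_apply, Pi.sub_apply] at hx
    linarith
  -- nonnegativity of T of the powers
  have hTB : 0 ≤ᵐ[m] (T (hfp.toLp _) : E → ℝ) := by
    refine hT _ ?_
    filter_upwards [hfp.coeFn_toLp] with x hx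
    rw [hx]
    exact Real.rpow_nonneg (hf0 x) p
  have hTC : 0 ≤ᵐ[m] (T (hgq.toLp _) : E → ℝ) := by
    refine hT _ ?_
    filter_upwards [hgq.coeFn_toLp] with x hx
    rw [hx]
    exact Real.rpow_nonneg (hg0 x) q
  -- the key step for each positive rational
  have step : ∀ r : ℚ, 0 < r → ∀ᵐ x ∂m,
      (T (hfg.toLp _) : E → ℝ) x ≤
        (r:ℝ) ^ p * (T (hfp.toLp _) : E → ℝ) x / p +
          (r:ℝ) ^ (-q) * (T (hgq.toLp _) : E → ℝ) x / q := by
    intro r hr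
    have hrR : (0:ℝ) < (r:ℝ) := by exact_mod_cast hr
    set c1 : ℝ := (r:ℝ) ^ p / p with hc1
    set c2 : ℝ := (r:ℝ) ^ (-q) / q with hc2
    have hptwise : ∀ x, f x * g x ≤ c1 * f x ^ p + c2 * g x ^ q := by
      intro x
      have hy := Real.young_inequality_of_nonneg
        (mul_nonneg hrR.le (hf0 x)) (div_nonneg (hg0 x) hrR.le) hpq'
      have he1 : ((r:ℝ) * f x) * (g x / (r:ℝ)) = f x * g x := by
        field_simp
      have he2 : ((r:ℝ) * f x) ^ p = (r:ℝ) ^ p * f x ^ p :=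
        Real.mul_rpow hrR.le (hf0 x)
      have he3 : (g x / (r:ℝ)) ^ q = (r:ℝ) ^ (-q) * g x ^ q := by
        rw [Real.div_rpow (hg0 x) hrR.le, div_eq_mul_inv, ← Real.rpow_neg hrR.le, mul_comm]
      rw [he1, he2, he3] at hy
      calc f x * g x ≤ (r:ℝ) ^ p * f x ^ p / p + (r:ℝ) ^ (-q) * g x ^ q / q := hy
        _ = c1 * f x ^ p + c2 * g x ^ q := by rw [hc1, hc2]; ring
    have hGcoe : ((c1 • hfp.toLp _ + c2 • hgq.toLp _ : Lp ℝ 1 m) : E → ℝ) =ᵐ[m]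
        fun x => c1 * f x ^ p + c2 * g x ^ q := by
      filter_upwards [Lp.coeFn_add (c1 • hfp.toLp _) (c2 • hgq.toLp _),
        Lp.coeFn_smul c1 (hfp.toLp _), Lp.coeFn_smul c2 (hgq.toLp _),
        hfp.coeFn_toLp, hgq.coeFn_toLp] with x h1 h2 h3 h4 h5
      rw [h1, Pi.add_apply, h2, h3, Pi.smul_apply, Pi.smul_apply, h4, h5,
        smul_eq_mul, smul_eq_mul]
    have hle : (hfg.toLp _ : E → ℝ) ≤ᵐ[m]
        ((c1 • hfp.toLp _ + c2 • hgq.toLp _ : Lp ℝ 1 m) : E → ℝ) := by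
      filter_upwards [hfg.coeFn_toLp, hGcoe] with x h1 h2
      rw [h1, h2]
      exact hptwise x
    have hTle := hmono _ _ hle
    have hmap : T (c1 • hfp.toLp _ + c2 • hgq.toLp _) =
        c1 • T (hfp.toLp _) + c2 • T (hgq.toLp _) := by
      rw [map_add, LinearMap.map_smul, LinearMap.map_smul]
    rw [hmap] at hTle
    have hTG : ((c1 • T (hfp.toLp _) + c2 • T (hgq.toLp _) : Lp ℝ 1 m) : E → ℝ) =ᵐ[m]
        fun x => c1 * (T (hfp.toLp _) : E → ℝ) x + c2 * (T (hgq.toLp _) : E → ℝ) x := by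
      filter_upwards [Lp.coeFn_add (c1 • T (hfp.toLp _)) (c2 • T (hgq.toLp _)),
        Lp.coeFn_smul c1 (T (hfp.toLp _)), Lp.coeFn_smul c2 (T (hgq.toLp _))]
        with x h1 h2 h3
      rw [h1, Pi.add_apply, h2, h3, Pi.smul_apply, Pi.smul_apply, smul_eq_mul, smul_eq_mul]
    filter_upwards [hTle, hTG] with x h1 h2
    rw [h2] at h1
    calc (T (hfg.toLp _) : E → ℝ) x
        ≤ c1 * (T (hfp.toLp _) : E → ℝ) x + c2 * (T (hgq.toLp _) : E → ℝ) x := h1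
      _ = (r:ℝ) ^ p * (T (hfp.toLp _) : E → ℝ) x / p +
          (r:ℝ) ^ (-q) * (T (hgq.toLp _) : E → ℝ) x / q := by rw [hc1, hc2]; ring
  have hall : ∀ᵐ x ∂m, ∀ r : ℚ, 0 < r →
      (T (hfg.toLp _) : E → ℝ) x ≤
        (r:ℝ) ^ p * (T (hfp.toLp _) : E → ℝ) x / p +
          (r:ℝ) ^ (-q) * (T (hgq.toLp _) : E → ℝ) x / q := by
    rw [MeasureTheory.ae_all_iff]
    intro r
    by_cases hr : 0 < r
    · filter_upwards [step r hr] with x hx _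
      exact hx
    · exact Filter.Eventually.of_forall fun x hx => absurd hx hr
  filter_upwards [hall, hTB, hTC] with x h1 h2 h3
  exact aux_rat hpq' h2 h3 h1
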